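/- Let n be odd, let k be a positive integer with gcd(k, n) = 1, and let b, c be elements of L = GF(2^n), not both zero. Then the equation b u^{2^k} + b^{2^{-k}} u^{2^{-k}} + c u^{2^{3k}} + c^{2^{-3k}} u^{2^{-3k}} = 0 has at most 8 solutions u in L. -/

import Mathlib

open Finset

/-- `ipow j x` is `x^{2^{-j}}`, the unique element of `GF(2^n)` whose `2^j`-th power is `x`
(the inverse of the `j`-th iterate of the Frobenius automorphism). -/
noncomputable def ipow {n : ℕ} (j : ℕ) (x : GaloisField 2 n) : GaloisField 2 n :=
  Function.invFun (fun y : GaloisField 2 n => y ^ 2 ^ j) x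

section Aux
variable {L : Type*} [Field L]

lemma pow2_inj [CharP L 2] (i : ℕ) {x y : L} (h : x ^ 2 ^ i = y ^ 2 ^ i) : x = y := by
  have h2 : (x - y) ^ 2 ^ i = 0 := by
    rw [sub_pow_char_pow, h, sub_self]
  exact sub_eq_zero.mp (pow_eq_zero_iff (pow_ne_zero i two_ne_zero) |>.mp h2)

lemma pow2_fix_gcd [CharP L 2] (x : L) : ∀ i j : ℕ, x ^ 2 ^ i = x → x ^ 2 ^ j = x →
    x ^ 2 ^ (Nat.gcd i j) = x := by
  intro i
  induction i using Nat.strong_induction_on with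
  | _ i ih =>
    intro j hi hj
    rcases Nat.eq_zero_or_pos i with h0 | hpos
    · subst h0; simpa using hj
    · rw [Nat.gcd_rec]
      have hmul : ∀ q, x ^ 2 ^ (i * q) = x := by
        intro q
        induction q with
        | zero => simp
        | succ q ihq =>
          have he : i * (q + 1) = i * q + i := by ring
          rw [he, pow_add, pow_mul, ihq, hi]
      have hmod : x ^ 2 ^ (j % i) = x := by
        apply pow2_inj (i * (j / i))
        have h1 : (x ^ 2 ^ (j % i)) ^ 2 ^ (i * (j / i)) = x ^ 2 ^ (j % i + i * (j / i)) := by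
          rw [← pow_mul, ← pow_add]
        have h2 : j % i + i * (j / i) = j := Nat.mod_add_div j i
        rw [h1, h2, hj, hmul]
      exact ih (j % i) (Nat.mod_lt _ hpos) i hmod hi

lemma iter_ne_zero (σ : L →+* L) (j : ℕ) {x : L} (h : x ≠ 0) : σ^[j] x ≠ 0 := by
  intro h0
  exact h (Function.Injective.iterate σ.injective j (by simpa using h0))

lemma ncard_le_two_mul [Finite L] {S T : Set L} (g : L → L) (v : L)
    (hg : ∀ u ∈ S, g u ∈ T)
    (hfib : ∀ u ∈ S, ∀ u' ∈ S, g u = g u' → u = u' ∨ u = u' + v) :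
    S.ncard ≤ 2 * T.ncard := by
  classical
  have hS : S.Finite := Set.toFinite S
  have hT : T.Finite := Set.toFinite T
  rw [Set.ncard_eq_toFinset_card _ hS, Set.ncard_eq_toFinset_card _ hT]
  have h1 : hS.toFinset.card ≤ 2 * (hS.toFinset.image g).card := by
    apply Finset.card_le_mul_card_image
    intro a ha
    rw [Finset.mem_image] at ha
    obtain ⟨u', hu', hgu'⟩ := ha
    rw [Set.Finite.mem_toFinset] at hu'
    have hsub : {x ∈ hS.toFinset | g x = a} ⊆ {u', u' + v} := by
      intro u hu
      rw [Finset.mem_filter, Set.Finite.mem_toFinset] at hu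
      have := hfib u hu.1 u' hu' (by rw [hu.2, hgu'])
      simp only [Finset.mem_insert, Finset.mem_singleton]
      exact this
    calc {x ∈ hS.toFinset | g x = a}.card ≤ ({u', u' + v} : Finset L).card :=
          Finset.card_le_card hsub
      _ ≤ 2 := Finset.card_insert_le _ _ |>.trans (by simp)
  have h2 : hS.toFinset.image g ⊆ hT.toFinset := by
    intro x hx
    rw [Finset.mem_image] at hx
    obtain ⟨u, hu, hgu⟩ := hx
    rw [Set.Finite.mem_toFinset] at hu ⊢
    rw [← hgu]; exact hg u hu
  exact h1.trans (Nat.mul_le_mul_left 2 (Finset.card_le_card h2))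

/-- The kernel of a nonzero twisted polynomial of degree `d` in `σ`, where `σ` has fixed
points only `0` and `1`, has at most `2 ^ d` elements. -/
lemma kernel_card [Finite L] [CharP L 2] (σ : L →+* L)
    (hfix : ∀ x : L, σ x = x → x = 0 ∨ x = 1) :
    ∀ (d : ℕ) (a : ℕ → L), (∃ i, i ≤ d ∧ a i ≠ 0) →
      {u : L | ∑ i ∈ Finset.range (d + 1), a i * (σ^[i] u) = 0}.ncard ≤ 2 ^ d := by
  intro d
  induction d with
  | zero =>
    rintro a ⟨i, hi, ha⟩
    interval_cases i
    have hsub : {u : L | ∑ i ∈ Finset.range 1, a i * (σ^[i] u) = 0} ⊆ {0} := by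
      intro u hu
      simp only [Set.mem_setOf_eq, Finset.sum_range_one, Function.iterate_zero, id_eq] at hu
      simpa using (mul_eq_zero.mp hu).resolve_left ha
    calc {u : L | ∑ i ∈ Finset.range 1, a i * (σ^[i] u) = 0}.ncard
        ≤ ({0} : Set L).ncard := Set.ncard_le_ncard hsub (Set.finite_singleton 0)
      _ = 1 := Set.ncard_singleton 0
      _ ≤ 2 ^ 0 := by norm_num
  | succ d ih =>
    rintro a ⟨i0, hi0, ha0⟩
    set S := {u : L | ∑ i ∈ Finset.range (d + 1 + 1), a i * (σ^[i] u) = 0} with hSdef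
    by_cases hS : S ⊆ {0}
    · calc S.ncard ≤ ({0} : Set L).ncard := Set.ncard_le_ncard hS (Set.finite_singleton 0)
        _ = 1 := Set.ncard_singleton 0
        _ ≤ 2 ^ (d + 1) := Nat.one_le_two_pow
    · obtain ⟨v, hvS, hv0⟩ := Set.not_subset.mp hS
      rw [Set.mem_singleton_iff] at hv0
      set b : ℕ → L := fun i => a i * σ^[i] v with hbdef
      have hbsum : ∑ i ∈ Finset.range (d + 2), b i = 0 := hvS
      set c : ℕ → L := fun j => ∑ i ∈ Finset.Ioc j (d + 1), b i with hcdef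
      have hcrec : ∀ j ≤ d, c j = b (j + 1) + c (j + 1) := by
        intro j hj
        have h1 : (∑ i ∈ Finset.Ioc j (j + 1), b i) + ∑ i ∈ Finset.Ioc (j + 1) (d + 1), b i
            = ∑ i ∈ Finset.Ioc j (d + 1), b i :=
          Finset.sum_Ioc_consecutive _ (Nat.le_succ j) (by omega)
        have h2 : Finset.Ioc j (j + 1) = {j + 1} := by
          ext m; simp [Finset.mem_Ioc]
        rw [h2, Finset.sum_singleton] at h1
        rw [hcdef]
        exact h1.symm
      have hctop : c (d + 1) = 0 := by rw [hcdef]; simp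
      have hcex : ∃ j, j ≤ d ∧ c j ≠ 0 := by
        by_contra hall
        push_neg at hall
        have hb1 : ∀ j ≤ d, b (j + 1) = 0 := by
          intro j hj
          have h1 := hcrec j hj
          have h2 : c j = 0 := hall j hj
          have h3 : c (j + 1) = 0 := by
            rcases Nat.lt_or_ge j d with h | h
            · exact hall (j + 1) h
            · have : j = d := le_antisymm hj h
              rw [this]; exact hctop
          rw [h2, h3, add_zero] at h1
          exact h1.symm
        have hb0 : b 0 = 0 := by
          have h1 : ∑ i ∈ Finset.range (d + 2), b i
              = (∑ i ∈ Finset.range (d + 1), b (i + 1)) + b 0 := Finset.sum_range_succ' b (d + 1)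
          have h2 : ∑ i ∈ Finset.range (d + 1), b (i + 1) = 0 := by
            apply Finset.sum_eq_zero
            intro i hi
            exact hb1 i (by simpa using Nat.lt_succ_iff.mp (Finset.mem_range.mp hi))
          rw [h2, zero_add] at h1
          rw [← h1, hbsum]
        have hbi0 : b i0 = 0 := by
          rcases Nat.eq_zero_or_pos i0 with h | h
          · rw [h]; exact hb0
          · obtain ⟨j, rfl⟩ := Nat.exists_eq_succ_of_ne_zero (Nat.pos_iff_ne_zero.mp h)
            exact hb1 j (by omega)
        exact (mul_ne_zero ha0 (iter_ne_zero σ i0 hv0)) hbi0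
      obtain ⟨j0, hj0, hcj0⟩ := hcex
      set T := {w : L | ∑ j ∈ Finset.range (d + 1), c j * (σ^[j] w) = 0} with hTdef
      have hT : T.ncard ≤ 2 ^ d := ih c ⟨j0, hj0, hcj0⟩
      set g : L → L := fun u => σ (u / v) - u / v with hgdef
      have hg : ∀ u ∈ S, g u ∈ T := by
        intro u hu
        have hvw : v * (u / v) = u := by field_simp
        set w := u / v with hwdef
        have hiter : ∀ j : ℕ, σ^[j] (g u) = σ^[j + 1] w - σ^[j] w := by
          intro j
          rw [hgdef]
          simp only []
          rw [iterate_map_sub, ← Function.iterate_succ_apply]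
        have key : ∑ j ∈ Finset.range (d + 1), c j * (σ^[j + 1] w - σ^[j] w) = 0 := by
          have e1 : ∑ j ∈ Finset.range (d + 1), c j * (σ^[j + 1] w - σ^[j] w)
              = ∑ j ∈ Finset.range (d + 1), ∑ i ∈ Finset.Ioc j (d + 1),
                  b i * (σ^[j + 1] w - σ^[j] w) := by
            apply Finset.sum_congr rfl
            intro j _
            rw [hcdef, Finset.sum_mul]
          have e2 : ∑ j ∈ Finset.range (d + 1), ∑ i ∈ Finset.Ioc j (d + 1),
                  b i * (σ^[j + 1] w - σ^[j] w)
              = ∑ i ∈ Finset.range (d + 2), ∑ j ∈ Finset.range i,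
                  b i * (σ^[j + 1] w - σ^[j] w) := by
            apply Finset.sum_comm'
            intro j i
            simp only [Finset.mem_range, Finset.mem_Ioc]
            omega
          have e3 : ∀ i ∈ Finset.range (d + 2), ∑ j ∈ Finset.range i,
                  b i * (σ^[j + 1] w - σ^[j] w) = b i * (σ^[i] w - σ^[0] w) := by
            intro i _
            rw [← Finset.mul_sum, Finset.sum_range_sub (fun j => σ^[j] w)]
          have e4 : ∑ i ∈ Finset.range (d + 2), b i * (σ^[i] w - σ^[0] w)
              = (∑ i ∈ Finset.range (d + 2), b i * σ^[i] w)
                - (∑ i ∈ Finset.range (d + 2), b i) * σ^[0] w := by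
            rw [Finset.sum_mul, ← Finset.sum_sub_distrib]
            apply Finset.sum_congr rfl
            intro i _
            ring
          have e5 : ∑ i ∈ Finset.range (d + 2), b i * σ^[i] w = 0 := by
            have hterm : ∀ i, b i * σ^[i] w = a i * σ^[i] u := by
              intro i
              rw [hbdef]
              simp only []
              rw [mul_assoc, ← iterate_map_mul, hvw]
            simp_rw [hterm]
            exact hu
          rw [e1, e2, Finset.sum_congr rfl e3, e4, e5, hbsum, zero_mul, sub_zero]
        rw [hTdef]
        simp only [Set.mem_setOf_eq]
        calc ∑ j ∈ Finset.range (d + 1), c j * σ^[j] (g u)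
            = ∑ j ∈ Finset.range (d + 1), c j * (σ^[j + 1] w - σ^[j] w) := by
              apply Finset.sum_congr rfl; intro j _; rw [hiter]
          _ = 0 := key
      have hfib : ∀ u ∈ S, ∀ u' ∈ S, g u = g u' → u = u' ∨ u = u' + v := by
        intro u _ u' _ hgu
        have hz : σ (u / v - u' / v) = u / v - u' / v := by
          rw [map_sub]
          have h : σ (u / v) - u / v = σ (u' / v) - u' / v := hgu
          linear_combination h
        rcases hfix _ hz with h | h
        · left
          have h2 : u / v = u' / v := by linear_combination h
          field_simp at h2
          exact h2
        · right
          have h2 : u / v = u' / v + 1 := by linear_combination h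
          field_simp at h2
          linear_combination h2
      calc S.ncard ≤ 2 * T.ncard := ncard_le_two_mul g v hg hfib
        _ ≤ 2 * 2 ^ d := Nat.mul_le_mul_left 2 hT
        _ = 2 ^ (d + 1) := by ring

end Aux

section GF
variable {n : ℕ}

lemma pow2_bij (j : ℕ) : Function.Bijective (fun y : GaloisField 2 n => y ^ 2 ^ j) := by
  have hinj : Function.Injective (fun y : GaloisField 2 n => y ^ 2 ^ j) := by
    intro x y h
    exact pow2_inj j h
  exact Finite.injective_iff_bijective.mp hinj

lemma ipow_pow (j : ℕ) (x : GaloisField 2 n) : (ipow j x) ^ 2 ^ j = x :=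
  Function.rightInverse_invFun (pow2_bij (n := n) j).surjective x

lemma fix_lemma (hn : Odd n) (k : ℕ) (hkn : Nat.gcd k n = 1)
    (x : GaloisField 2 n) (hx : x ^ 2 ^ (2 * k) = x) : x = 0 ∨ x = 1 := by
  have hn0 : n ≠ 0 := by rintro rfl; simp [Nat.odd_iff] at hn
  have := Fintype.ofFinite (GaloisField 2 n)
  have hcard : Fintype.card (GaloisField 2 n) = 2 ^ n := by
    rw [← Nat.card_eq_fintype_card, GaloisField.card 2 n hn0]
  have hxn : x ^ 2 ^ n = x := by
    rw [← hcard]; exact FiniteField.pow_card x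
  have hgcd : Nat.gcd (2 * k) n = 1 := Nat.Coprime.mul hn.coprime_two_left hkn
  have key := pow2_fix_gcd x (2 * k) n hx hxn
  rw [hgcd, pow_one] at key
  have hmul : x * (x - 1) = 0 := by ring_nf; linear_combination key
  rcases mul_eq_zero.mp hmul with h | h
  · left; exact h
  · right; linear_combination h

end GF

/-- The equation `b u^{2^k} + b^{2^{-k}} u^{2^{-k}} + c u^{2^{3k}} + c^{2^{-3k}} u^{2^{-3k}} = 0`
has at most 8 solutions. -/
theorem stmt_15 (n k : ℕ) (hn : Odd n) (hk : 0 < k) (hkn : Nat.gcd k n = 1)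
    (b c : GaloisField 2 n) (hbc : ¬(b = 0 ∧ c = 0)) :
    {u : GaloisField 2 n |
        b * u ^ 2 ^ k + ipow k b * ipow k u + c * u ^ 2 ^ (3 * k) +
          ipow (3 * k) c * ipow (3 * k) u = 0}.ncard ≤ 8 := by
  set σ : GaloisField 2 n →+* GaloisField 2 n := iterateFrobenius (GaloisField 2 n) 2 (2 * k)
    with hσdef
  have hσ : ∀ x : GaloisField 2 n, σ x = x ^ 2 ^ (2 * k) := fun x => rfl
  have hσiter : ∀ (i : ℕ) (x : GaloisField 2 n), σ^[i] x = x ^ 2 ^ (2 * k * i) := by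
    intro i
    induction i with
    | zero => intro x; simp
    | succ i ihi =>
      intro x
      rw [Function.iterate_succ_apply, ihi, hσ, ← pow_mul, ← pow_add]
      congr 1
      ring
  have hfix : ∀ x : GaloisField 2 n, σ x = x → x = 0 ∨ x = 1 := by
    intro x hx
    rw [hσ] at hx
    exact fix_lemma hn k hkn x hx
  set a : ℕ → GaloisField 2 n := fun i =>
    if i = 0 then c else if i = 1 then b ^ 2 ^ (2 * k)
    else if i = 2 then b ^ 2 ^ (3 * k) else if i = 3 then c ^ 2 ^ (3 * k) else 0 with hadef
  have haex : ∃ i, i ≤ 3 ∧ a i ≠ 0 := by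
    by_cases hc : c = 0
    · have hb : b ≠ 0 := fun hb => hbc ⟨hb, hc⟩
      exact ⟨1, by norm_num, by simp [hadef, pow_ne_zero _ hb]⟩
    · exact ⟨0, by norm_num, by simp [hadef, hc]⟩
  have hsub : {u : GaloisField 2 n |
        b * u ^ 2 ^ k + ipow k b * ipow k u + c * u ^ 2 ^ (3 * k) +
          ipow (3 * k) c * ipow (3 * k) u = 0}
      ⊆ {u : GaloisField 2 n | ∑ i ∈ Finset.range (3 + 1), a i * (σ^[i] u) = 0} := by
    intro u hu
    simp only [Set.mem_setOf_eq] at hu ⊢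
    -- raise the equation to the power 2 ^ (3k)
    have hq := congrArg (fun z : GaloisField 2 n => z ^ 2 ^ (3 * k)) hu
    rw [add_pow_char_pow, add_pow_char_pow, add_pow_char_pow, mul_pow, mul_pow, mul_pow,
      mul_pow, zero_pow (pow_ne_zero _ two_ne_zero)] at hq
    -- simplify the ipow terms
    have e2a : (ipow k b) ^ 2 ^ (3 * k) = b ^ 2 ^ (2 * k) := by
      have h3 : (3 * k) = k + 2 * k := by ring
      rw [h3, pow_add, pow_mul, ipow_pow]
    have e2b : (ipow k u) ^ 2 ^ (3 * k) = u ^ 2 ^ (2 * k) := by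
      have h3 : (3 * k) = k + 2 * k := by ring
      rw [h3, pow_add, pow_mul, ipow_pow]
    have e4a : (ipow (3 * k) c) ^ 2 ^ (3 * k) = c := ipow_pow _ _
    have e4b : (ipow (3 * k) u) ^ 2 ^ (3 * k) = u := ipow_pow _ _
    have e1 : (u ^ 2 ^ k) ^ 2 ^ (3 * k) = u ^ 2 ^ (2 * k * 2) := by
      rw [← pow_mul, ← pow_add]
      congr 1
      have : k + 3 * k = 2 * k * 2 := by ring
      rw [this]
    have e3 : (u ^ 2 ^ (3 * k)) ^ 2 ^ (3 * k) = u ^ 2 ^ (2 * k * 3) := by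
      rw [← pow_mul, ← pow_add]
      congr 1
      have : 3 * k + 3 * k = 2 * k * 3 := by ring
      rw [this]
    rw [e2a, e2b, e4a, e4b, e1, e3] at hq
    -- expand the sum
    rw [Finset.sum_range_succ, Finset.sum_range_succ, Finset.sum_range_succ,
      Finset.sum_range_one]
    simp only [hadef, hσiter, Function.iterate_zero, id_eq]
    norm_num
    linear_combination hq
  calc {u : GaloisField 2 n |
        b * u ^ 2 ^ k + ipow k b * ipow k u + c * u ^ 2 ^ (3 * k) +
          ipow (3 * k) c * ipow (3 * k) u = 0}.ncard
      ≤ {u : GaloisField 2 n | ∑ i ∈ Finset.range (3 + 1), a i * (σ^[i] u) = 0}.ncard :=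
        Set.ncard_le_ncard hsub (Set.toFinite _)
    _ ≤ 2 ^ 3 := kernel_card σ hfix 3 a haex
    _ = 8 := by norm_num
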